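/- Let n ≥ 4 and let R ≅ F₁ × ⋯ × Fₙ be a direct product of n fields. Then the metric dimension of the prime ideal sum graph PIS(R) is at least n. -/

import Mathlib

open scoped Classical

/-- The vertex set of the prime ideal sum graph: nonzero proper ideals of `R`. -/
abbrev PISVertex (R : Type*) [CommRing R] := {I : Ideal R // I ≠ ⊥ ∧ I ≠ ⊤}

/-- The prime ideal sum graph of a commutative ring `R`: vertices are nonzero proper
ideals, and two distinct vertices `I`, `J` are adjacent iff `I + J` is a prime ideal. -/
def PIS (R : Type*) [CommRing R] : SimpleGraph (PISVertex R) where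
  Adj I J := I ≠ J ∧ (I.1 + J.1).IsPrime
  symm := ⟨fun I J h => ⟨h.1.symm, by rw [add_comm]; exact h.2⟩⟩
  loopless := ⟨fun I h => h.1 rfl⟩

/-- A set `S` of vertices is a resolving set if any two distinct vertices not both in `S`
are distinguished by the distance to some vertex of `S`. -/
def IsResolvingSet {V : Type*} (G : SimpleGraph V) (S : Set V) : Prop :=
  ∀ u v : V, u ≠ v → ¬(u ∈ S ∧ v ∈ S) → ∃ w ∈ S, G.dist u w ≠ G.dist v w

/-- The metric dimension of a graph: the least cardinality of a resolving set. -/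
noncomputable def metricDim {V : Type*} (G : SimpleGraph V) : ℕ∞ :=
  ⨅ S : {S : Set V // IsResolvingSet G S}, (S : Set V).encard


section Aux
variable {n : ℕ} {F : Fin n → Type*} [∀ i, Field (F i)]

/-- Ideal of the product ring supported on `s`. -/
def IA (F : Fin n → Type*) [∀ i, Field (F i)] (s : Finset (Fin n)) : Ideal (∀ i, F i) where
  carrier := {x | ∀ i ∉ s, x i = 0}
  add_mem' := fun {a b} ha hb i hi => by simp [ha i hi, hb i hi]
  zero_mem' := fun i _ => rfl
  smul_mem' := fun c x hx i hi => by simp [smul_eq_mul, hx i hi]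

lemma mem_IA {s : Finset (Fin n)} {x : ∀ i, F i} : x ∈ IA F s ↔ ∀ i ∉ s, x i = 0 := Iff.rfl

lemma single_mem_IA {s : Finset (Fin n)} {i : Fin n} (hi : i ∈ s) (c : F i) :
    Pi.single i c ∈ IA F s := fun j hj => Pi.single_eq_of_ne (fun h : j = i => hj (h ▸ hi)) c

lemma single_one_not_mem_IA {s : Finset (Fin n)} {i : Fin n} (hi : i ∉ s) :
    Pi.single i (1 : F i) ∉ IA F s := fun h => one_ne_zero ((Pi.single_eq_same i (1 : F i)) ▸ h i hi)

lemma IA_injective : Function.Injective (IA F) := by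
  intro s t h
  ext i
  constructor
  · intro hi
    by_contra hit
    exact single_one_not_mem_IA hit (h ▸ single_mem_IA hi 1)
  · intro hi
    by_contra his
    exact single_one_not_mem_IA his (h ▸ single_mem_IA hi 1)

/-- support of an ideal -/
noncomputable def suppA (I : Ideal (∀ i, F i)) : Finset (Fin n) :=
  Finset.univ.filter (fun i => ∃ x ∈ I, x i ≠ 0)

lemma IA_suppA (I : Ideal (∀ i, F i)) : I = IA F (suppA I) := by
  apply le_antisymm
  · intro x hx i hi
    simp only [suppA, Finset.mem_filter, Finset.mem_univ, true_and, not_exists] at hi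
    by_contra h
    exact (hi x) ⟨hx, h⟩
  · intro x hx
    have hrw : x = ∑ i ∈ suppA I, Pi.single i (x i) := by
      funext j
      rw [Finset.sum_apply]
      by_cases hj : j ∈ suppA I
      · rw [Finset.sum_eq_single_of_mem j hj (fun i _ hij => Pi.single_eq_of_ne (Ne.symm hij) _),
          Pi.single_eq_same]
      · rw [hx j hj, Finset.sum_eq_zero]
        intro i hi
        exact Pi.single_eq_of_ne (fun h : j = i => hj (h ▸ hi)) _
    rw [hrw]
    apply Ideal.sum_mem
    intro i hi
    simp only [suppA, Finset.mem_filter, Finset.mem_univ, true_and] at hi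
    obtain ⟨y, hyI, hyi⟩ := hi
    have : Pi.single i (x i) = Pi.single i (x i * (y i)⁻¹) * y := by
      funext k
      by_cases hk : k = i
      · subst hk
        simp [mul_assoc, inv_mul_cancel₀ hyi]
      · simp [Pi.single_eq_of_ne hk]
    rw [this]
    exact I.mul_mem_left _ hyI

lemma IA_add (s t : Finset (Fin n)) : IA F s + IA F t = IA F (s ∪ t) := by
  apply le_antisymm
  · rw [Ideal.add_eq_sup, sup_le_iff]
    constructor <;> intro x hx i hi <;>
      [exact hx i (fun h => hi (Finset.mem_union_left _ h));
       exact hx i (fun h => hi (Finset.mem_union_right _ h))]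
  · intro x hx
    rw [Ideal.add_eq_sup, Submodule.mem_sup]
    refine ⟨fun i => if i ∈ s then x i else 0, fun i hi => by simp [hi],
      fun i => if i ∈ s then 0 else x i, fun i hi => ?_, by funext i; by_cases h : i ∈ s <;> simp [h]⟩
    by_cases h : i ∈ s
    · simp [h]
    · simp [h, hx i (fun hmem => (Finset.mem_union.mp hmem).elim h hi)]

lemma IA_eq_bot_iff {s : Finset (Fin n)} : IA F s = ⊥ ↔ s = ∅ := by
  constructor
  · intro h
    by_contra hs
    obtain ⟨i, hi⟩ := Finset.nonempty_iff_ne_empty.mpr hs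
    have := single_mem_IA (F := F) hi 1
    rw [h, Ideal.mem_bot] at this
    have h2 := congrFun this i
    rw [Pi.single_eq_same] at h2
    exact one_ne_zero h2
  · rintro rfl
    ext x
    simp only [mem_IA, Ideal.mem_bot]
    exact ⟨fun h => funext fun i => h i (by simp), fun h i _ => by rw [h]; rfl⟩

lemma IA_eq_top_iff {s : Finset (Fin n)} : IA F s = ⊤ ↔ s = Finset.univ := by
  constructor
  · intro h
    by_contra hs
    obtain ⟨i, hi⟩ : ∃ i, i ∉ s := by
      by_contra hall
      push_neg at hall
      exact hs (Finset.eq_univ_iff_forall.mpr hall)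
    have : (1 : ∀ i, F i) ∈ IA F s := h ▸ Submodule.mem_top
    exact one_ne_zero (this i hi)
  · rintro rfl
    exact top_le_iff.mp (fun x _ i hi => absurd (Finset.mem_univ i) hi)

lemma IA_isPrime_iff {s : Finset (Fin n)} (_hn : 0 < n) :
    (IA F s).IsPrime ↔ ∃ i, s = Finset.univ.erase i := by
  constructor
  · intro hp
    have hs : s ≠ Finset.univ := fun h => hp.ne_top (IA_eq_top_iff.mpr h)
    obtain ⟨i, hi⟩ : ∃ i, i ∉ s := by
      by_contra hall
      push_neg at hall
      exact hs (Finset.eq_univ_iff_forall.mpr hall)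
    refine ⟨i, ?_⟩
    ext j
    simp only [Finset.mem_erase, Finset.mem_univ, and_true]
    constructor
    · intro hj
      exact fun h => hi (h ▸ hj)
    · intro hj
      by_contra hjs
      have hmul : Pi.single i (1 : F i) * Pi.single j (1 : F j) ∈ IA F s := by
        have : Pi.single i (1 : F i) * Pi.single j (1 : F j) = 0 := by
          funext k
          by_cases hk : k = i
          · subst hk
            simp [Pi.single_eq_of_ne (Ne.symm hj)]
          · simp [Pi.single_eq_of_ne hk]
        rw [this]; exact (IA F s).zero_mem
      rcases hp.mem_or_mem hmul with h | h
      · exact single_one_not_mem_IA hi h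
      · exact single_one_not_mem_IA hjs h
  · rintro ⟨i, rfl⟩
    have : IA F (Finset.univ.erase i) = RingHom.ker (Pi.evalRingHom F i) := by
      ext x
      simp only [mem_IA, RingHom.mem_ker, Pi.evalRingHom_apply]
      constructor
      · intro h
        exact h i (by simp)
      · intro h j hj
        have : j = i := by
          by_contra hji
          exact hj (Finset.mem_erase.mpr ⟨hji, Finset.mem_univ j⟩)
        subst this; exact h
    rw [this]
    exact RingHom.ker_isPrime _

end Aux

section Transfer
variable {n : ℕ} {F : Fin n → Type*} [∀ i, Field (F i)] {R : Type*} [CommRing R]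

/-- The ideal of `R` corresponding to support `s`. -/
def JR (e : R ≃+* ∀ i, F i) (s : Finset (Fin n)) : Ideal R :=
  Ideal.comap (e : R →+* ∀ i, F i) (IA F s)

lemma mem_JR {e : R ≃+* ∀ i, F i} {s : Finset (Fin n)} {x : R} :
    x ∈ JR e s ↔ e x ∈ IA F s := Iff.rfl

noncomputable def suppR (e : R ≃+* ∀ i, F i) (I : Ideal R) : Finset (Fin n) :=
  suppA (Ideal.comap (e.symm : (∀ i, F i) →+* R) I)

lemma JR_suppR (e : R ≃+* ∀ i, F i) (I : Ideal R) : I = JR e (suppR e I) := by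
  have h := IA_suppA (Ideal.comap (e.symm : (∀ i, F i) →+* R) I)
  ext x
  rw [mem_JR, suppR, ← h, Ideal.mem_comap]
  simp

lemma JR_injective (e : R ≃+* ∀ i, F i) : Function.Injective (JR e) := by
  intro s t h
  apply IA_injective (F := F)
  ext x
  constructor <;> intro hx
  · have hx2 : e.symm x ∈ JR e s := by rw [mem_JR, e.apply_symm_apply]; exact hx
    rw [h, mem_JR, e.apply_symm_apply] at hx2
    exact hx2
  · have hx2 : e.symm x ∈ JR e t := by rw [mem_JR, e.apply_symm_apply]; exact hx
    rw [← h, mem_JR, e.apply_symm_apply] at hx2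
    exact hx2

lemma JR_add (e : R ≃+* ∀ i, F i) (s t : Finset (Fin n)) :
    JR e s + JR e t = JR e (s ∪ t) := by
  ext x
  rw [mem_JR, ← IA_add, Ideal.add_eq_sup, Ideal.add_eq_sup, Submodule.mem_sup, Submodule.mem_sup]
  constructor
  · rintro ⟨y, hy, z, hz, rfl⟩
    exact ⟨e y, hy, e z, hz, (map_add e y z).symm⟩
  · rintro ⟨y, hy, z, hz, hyz⟩
    refine ⟨e.symm y, ?_, e.symm z, ?_, ?_⟩
    · rw [mem_JR, e.apply_symm_apply]; exact hy
    · rw [mem_JR, e.apply_symm_apply]; exact hz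
    · apply e.injective
      rw [map_add, e.apply_symm_apply, e.apply_symm_apply, hyz]

lemma JR_eq_bot_iff {e : R ≃+* ∀ i, F i} {s : Finset (Fin n)} : JR e s = ⊥ ↔ s = ∅ := by
  rw [← IA_eq_bot_iff (F := F)]
  constructor
  · intro h
    rw [eq_bot_iff]
    intro x hx
    have : e.symm x ∈ JR e s := by rw [mem_JR, e.apply_symm_apply]; exact hx
    rw [h, Ideal.mem_bot] at this
    rw [Ideal.mem_bot, ← map_zero e, ← this, e.apply_symm_apply]
  · intro h
    rw [eq_bot_iff]
    intro x hx
    rw [mem_JR, h, Ideal.mem_bot] at hx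
    rw [Ideal.mem_bot, ← map_eq_zero_iff e e.injective]
    exact hx

lemma JR_eq_top_iff {e : R ≃+* ∀ i, F i} {s : Finset (Fin n)} : JR e s = ⊤ ↔ s = Finset.univ := by
  rw [← IA_eq_top_iff (F := F)]
  constructor
  · intro h
    rw [eq_top_iff]
    intro x _
    have : e.symm x ∈ JR e s := h ▸ Submodule.mem_top
    rw [mem_JR, e.apply_symm_apply] at this
    exact this
  · intro h
    rw [eq_top_iff]
    intro x _
    rw [mem_JR, h]
    exact Submodule.mem_top

lemma JR_isPrime_iff {e : R ≃+* ∀ i, F i} {s : Finset (Fin n)} (hn : 0 < n) :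
    (JR e s).IsPrime ↔ ∃ i, s = Finset.univ.erase i := by
  rw [← IA_isPrime_iff (F := F) hn]
  constructor
  · intro h
    have : IA F s = Ideal.comap (e.symm : (∀ i, F i) →+* R) (JR e s) := by
      ext x
      simp only [Ideal.mem_comap, mem_JR, RingEquiv.coe_toRingHom,
        RingEquiv.apply_symm_apply]
    rw [this]
    exact Ideal.IsPrime.comap _
  · intro h
    exact Ideal.IsPrime.comap _

end Transfer

section Graph
variable {n : ℕ} {F : Fin n → Type*} [∀ i, Field (F i)] {R : Type*} [CommRing R]

/-- The vertex corresponding to a nonempty proper support set. -/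
def vtx (e : R ≃+* ∀ i, F i) (s : Finset (Fin n)) (h1 : s ≠ ∅) (h2 : s ≠ Finset.univ) :
    PISVertex R :=
  ⟨JR e s, fun h => h1 (JR_eq_bot_iff.mp h), fun h => h2 (JR_eq_top_iff.mp h)⟩

/-- support of a vertex -/
noncomputable def σv (e : R ≃+* ∀ i, F i) (v : PISVertex R) : Finset (Fin n) :=
  suppR e v.1

lemma JR_σv (e : R ≃+* ∀ i, F i) (v : PISVertex R) : v.1 = JR e (σv e v) := JR_suppR e v.1

lemma σv_ne_empty (e : R ≃+* ∀ i, F i) (v : PISVertex R) : σv e v ≠ ∅ :=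
  fun h => v.2.1 (by rw [JR_σv e v, JR_eq_bot_iff]; exact h)

lemma σv_ne_univ (e : R ≃+* ∀ i, F i) (v : PISVertex R) : σv e v ≠ Finset.univ :=
  fun h => v.2.2 (by rw [JR_σv e v, JR_eq_top_iff]; exact h)

lemma σv_injective (e : R ≃+* ∀ i, F i) : Function.Injective (σv e) := by
  intro u v h
  apply Subtype.ext
  rw [JR_σv e u, JR_σv e v, h]

lemma σv_vtx (e : R ≃+* ∀ i, F i) (s : Finset (Fin n)) (h1 : s ≠ ∅) (h2 : s ≠ Finset.univ) :
    σv e (vtx e s h1 h2) = s := by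
  apply JR_injective e
  exact (JR_suppR e (JR e s)).symm

lemma adj_iff (e : R ≃+* ∀ i, F i) (hn : 0 < n) (u v : PISVertex R) :
    (PIS R).Adj u v ↔ σv e u ≠ σv e v ∧ ∃ i, (σv e u)ᶜ ∩ (σv e v)ᶜ = {i} := by
  have hval : u.1 + v.1 = JR e (σv e u ∪ σv e v) := by
    rw [JR_σv e u, JR_σv e v, JR_add]
  constructor
  · rintro ⟨hne, hp⟩
    rw [hval, JR_isPrime_iff hn] at hp
    obtain ⟨i, hi⟩ := hp
    refine ⟨fun h => hne (σv_injective e h), i, ?_⟩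
    rw [← Finset.compl_union, hi, ← Finset.compl_singleton, compl_compl]
  · rintro ⟨hne, i, hi⟩
    refine ⟨fun h => hne (by rw [h]), ?_⟩
    rw [hval, JR_isPrime_iff hn]
    refine ⟨i, ?_⟩
    rw [← Finset.compl_singleton, ← hi, Finset.compl_inter, compl_compl, compl_compl]

lemma common_neighbor (e : R ≃+* ∀ i, F i) (hn : 4 ≤ n) {u v : PISVertex R} (huv : u ≠ v)
    (hadj : ¬ (PIS R).Adj u v) : ∃ w, (PIS R).Adj u w ∧ (PIS R).Adj w v := by
  have hn0 : 0 < n := by omega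
  set a := (σv e u)ᶜ with ha
  set b := (σv e v)ᶜ with hb
  have hab : a ≠ b := fun h => huv (σv_injective e (compl_injective h))
  have hnadj : ¬ ∃ i, a ∩ b = {i} := fun h => hadj ((adj_iff e hn0 u v).mpr
    ⟨fun hh => hab (by rw [ha, hb, hh]), h⟩)
  -- construct a suitable small set c with a ∩ c = {i}, b ∩ c = {j}, c ≠ a, c ≠ b
  have key : ∃ c : Finset (Fin n), c ≠ ∅ ∧ c ≠ Finset.univ ∧ c ≠ a ∧ c ≠ b ∧
      (∃ i, a ∩ c = {i}) ∧ (∃ j, b ∩ c = {j}) := by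
    by_cases hcap : (a ∩ b).Nonempty
    · obtain ⟨i, hi⟩ := hcap
      have hia : i ∈ a := (Finset.mem_inter.mp hi).1
      have hib : i ∈ b := (Finset.mem_inter.mp hi).2
      refine ⟨{i}, by simp, ?_, ?_, ?_, ⟨i, ?_⟩, ⟨i, ?_⟩⟩
      · intro h
        have := Finset.card_univ (α := Fin n) ▸ congrArg Finset.card h
        simp only [Finset.card_singleton, Fintype.card_fin] at this
        omega
      · intro h
        exact hnadj ⟨i, by
          rw [← h]
          exact Finset.inter_eq_left.mpr (Finset.singleton_subset_iff.mpr hib)⟩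
      · intro h
        exact hnadj ⟨i, by
          rw [← h]
          exact Finset.inter_eq_right.mpr (Finset.singleton_subset_iff.mpr hia)⟩
      · rw [Finset.inter_eq_right.mpr (Finset.singleton_subset_iff.mpr hia)]
      · rw [Finset.inter_eq_right.mpr (Finset.singleton_subset_iff.mpr hib)]
    · have hane : a.Nonempty := by
        rw [ha]
        rw [Finset.nonempty_iff_ne_empty]
        intro h
        exact σv_ne_univ e u ((Finset.compl_eq_empty_iff _).mp h)
      have hbne : b.Nonempty := by
        rw [hb, Finset.nonempty_iff_ne_empty]
        intro h
        exact σv_ne_univ e v ((Finset.compl_eq_empty_iff _).mp h)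
      obtain ⟨i, hia⟩ := hane
      obtain ⟨j, hjb⟩ := hbne
      have hdisj : a ∩ b = ∅ := Finset.not_nonempty_iff_eq_empty.mp hcap
      have hij : i ≠ j := by
        intro h
        have : i ∈ a ∩ b := Finset.mem_inter.mpr ⟨hia, h ▸ hjb⟩
        rw [hdisj] at this
        exact absurd this (Finset.notMem_empty i)
      have hja : j ∉ a := fun h => by
        have : j ∈ a ∩ b := Finset.mem_inter.mpr ⟨h, hjb⟩
        rw [hdisj] at this; exact absurd this (Finset.notMem_empty j)
      have hib : i ∉ b := fun h => by
        have : i ∈ a ∩ b := Finset.mem_inter.mpr ⟨hia, h⟩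
        rw [hdisj] at this; exact absurd this (Finset.notMem_empty i)
      refine ⟨{i, j}, by simp, ?_, ?_, ?_, ⟨i, ?_⟩, ⟨j, ?_⟩⟩
      · intro h
        have := Finset.card_univ (α := Fin n) ▸ congrArg Finset.card h
        rw [Finset.card_insert_of_notMem (by simp [hij]), Finset.card_singleton,
          Fintype.card_fin] at this
        omega
      · intro h
        exact hja (h ▸ Finset.mem_insert_of_mem (Finset.mem_singleton_self j))
      · intro h
        exact hib (h ▸ Finset.mem_insert_self i {j})
      · ext k
        simp only [Finset.mem_inter, Finset.mem_insert, Finset.mem_singleton]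
        constructor
        · rintro ⟨hk, rfl | rfl⟩
          · rfl
          · exact absurd hk hja
        · rintro rfl
          exact ⟨hia, Or.inl rfl⟩
      · ext k
        simp only [Finset.mem_inter, Finset.mem_insert, Finset.mem_singleton]
        constructor
        · rintro ⟨hk, rfl | rfl⟩
          · exact absurd hk hib
          · rfl
        · rintro rfl
          exact ⟨hjb, Or.inr rfl⟩
  obtain ⟨c, hc1, hc2, hca, hcb, ⟨i, hi⟩, ⟨j, hj⟩⟩ := key
  have hcc1 : cᶜ ≠ ∅ := fun h => hc2 ((Finset.compl_eq_empty_iff _).mp h)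
  have hcc2 : cᶜ ≠ Finset.univ := fun h => hc1 ((Finset.compl_eq_univ_iff _).mp h)
  refine ⟨vtx e cᶜ hcc1 hcc2, ?_, ?_⟩
  · rw [adj_iff e hn0]
    rw [σv_vtx]
    refine ⟨fun h => hca (by rw [← compl_compl c, ← h, ha]), i, ?_⟩
    rw [compl_compl, ← ha, hi]
  · rw [adj_iff e hn0]
    rw [σv_vtx]
    refine ⟨fun h => hcb (by rw [← compl_compl c, h, hb]), j, ?_⟩
    rw [compl_compl, ← hb, Finset.inter_comm, hj]

lemma dist_eq_two (e : R ≃+* ∀ i, F i) (hn : 4 ≤ n) {u v : PISVertex R} (huv : u ≠ v)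
    (hadj : ¬ (PIS R).Adj u v) : (PIS R).dist u v = 2 := by
  obtain ⟨w, h1, h2⟩ := common_neighbor e hn huv hadj
  have hw : (PIS R).Walk u v := SimpleGraph.Walk.cons h1 (SimpleGraph.Walk.cons h2 SimpleGraph.Walk.nil)
  have hle : (PIS R).dist u v ≤ 2 := by
    have h := SimpleGraph.dist_le
      (SimpleGraph.Walk.cons h1 (SimpleGraph.Walk.cons h2 SimpleGraph.Walk.nil))
    simpa using h
  have h0 : (PIS R).dist u v ≠ 0 :=
    SimpleGraph.dist_ne_zero_iff_ne_and_reachable.mpr ⟨huv, hw.reachable⟩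
  have h1' : (PIS R).dist u v ≠ 1 := fun h => hadj (SimpleGraph.dist_eq_one_iff_adj.mp h)
  omega

/-- Equivalence between vertices and nonempty proper subsets. -/
noncomputable def vertexEquiv (e : R ≃+* ∀ i, F i) :
    PISVertex R ≃ {s : Finset (Fin n) // s ≠ ∅ ∧ s ≠ Finset.univ} where
  toFun v := ⟨σv e v, σv_ne_empty e v, σv_ne_univ e v⟩
  invFun s := vtx e s.1 s.2.1 s.2.2
  left_inv v := Subtype.ext (JR_σv e v).symm
  right_inv s := Subtype.ext (σv_vtx e s.1 s.2.1 s.2.2)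

end Graph

lemma two_pow_aux : ∀ m : ℕ, m + 6 ≤ 2 ^ (m + 3) := by
  intro m
  induction m with
  | zero => norm_num
  | succ k ih =>
    have : 2 ^ (k + 1 + 3) = 2 * 2 ^ (k + 3) := by ring
    omega

lemma card_vertices_lb {n : ℕ} (hn : 4 ≤ n) {F : Fin n → Type*} [∀ i, Field (F i)]
    {R : Type*} [CommRing R] (e : R ≃+* ∀ i, F i) [Fintype (PISVertex R)] :
    2 ^ n - 2 ≤ Fintype.card (PISVertex R) := by
  classical
  rw [Fintype.card_congr (vertexEquiv e)]
  rw [Fintype.card_subtype]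
  have hne : (∅ : Finset (Fin n)) ≠ Finset.univ := by
    have : (⟨0, by omega⟩ : Fin n) ∈ (Finset.univ : Finset (Fin n)) := Finset.mem_univ _
    · intro h
      rw [← h] at this
      exact absurd this (Finset.notMem_empty _)
  have hsub : (Finset.univ : Finset (Finset (Fin n))) \ {∅, Finset.univ} ⊆
      Finset.univ.filter (fun s => s ≠ ∅ ∧ s ≠ Finset.univ) := by
    intro s hs
    rw [Finset.mem_sdiff] at hs
    simp only [Finset.mem_insert, Finset.mem_singleton] at hs
    rw [Finset.mem_filter]
    exact ⟨Finset.mem_univ _, fun h => hs.2 (Or.inl h), fun h => hs.2 (Or.inr h)⟩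
  have hcard : ((Finset.univ : Finset (Finset (Fin n))) \ {∅, Finset.univ}).card = 2 ^ n - 2 := by
    rw [Finset.card_sdiff_of_subset (Finset.subset_univ _), Finset.card_univ, Fintype.card_finset,
      Fintype.card_fin, Finset.card_insert_of_notMem (by simpa using hne),
      Finset.card_singleton]
  calc 2 ^ n - 2 = ((Finset.univ : Finset (Finset (Fin n))) \ {∅, Finset.univ}).card :=
        hcard.symm
    _ ≤ _ := Finset.card_le_card hsub


/-- If `R` is isomorphic to a direct product of `n ≥ 4` fields, then the metric dimension
of its prime ideal sum graph is at least `n`. -/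
theorem metricDim_PIS_n_fields_ge {R : Type*} [CommRing R] {n : ℕ} (hn : 4 ≤ n)
    (F : Fin n → Type*) [∀ i, Field (F i)] (e : R ≃+* ∀ i, F i) :
    (n : ℕ∞) ≤ metricDim (PIS R) := by
  classical
  haveI : NeZero n := ⟨by omega⟩
  haveI : Fintype (PISVertex R) := Fintype.ofEquiv _ (vertexEquiv e).symm
  rw [metricDim]
  refine le_iInf ?_
  rintro ⟨S, hS⟩
  show (n : ℕ∞) ≤ S.encard
  by_contra hlt
  push_neg at hlt
  have hfin : S.Finite := Set.toFinite S
  rw [Set.encard_eq_coe_toFinset_card] at hlt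
  have hm : S.toFinset.card < n := by exact_mod_cast hlt
  -- injection from complement of S to Bool-vectors indexed by S
  set f : (↥(Sᶜ)) → (↥S → Bool) :=
    fun v w => decide ((PIS R).Adj v.1 w.1) with hf
  have hinj : Function.Injective f := by
    intro u v huv
    by_contra hne
    have hne' : u.1 ≠ v.1 := fun h => hne (Subtype.ext h)
    obtain ⟨w, hwS, hd⟩ := hS u.1 v.1 hne' (fun h => u.2 h.1)
    have hwu : w ≠ u.1 := fun h => u.2 (h ▸ hwS)
    have hwv : w ≠ v.1 := fun h => v.2 (h ▸ hwS)
    have hadj : (PIS R).Adj u.1 w ↔ (PIS R).Adj v.1 w := by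
      have := congrFun huv ⟨w, hwS⟩
      rw [hf] at this
      simpa [decide_eq_decide] using this
    apply hd
    by_cases ha : (PIS R).Adj u.1 w
    · rw [SimpleGraph.dist_eq_one_iff_adj.mpr ha,
        SimpleGraph.dist_eq_one_iff_adj.mpr (hadj.mp ha)]
    · rw [dist_eq_two e hn (Ne.symm hwu) ha,
        dist_eq_two e hn (Ne.symm hwv) (fun h => ha (hadj.mpr h))]
  have hcard1 : Fintype.card ↥(Sᶜ) ≤ 2 ^ S.toFinset.card := by
    have := Fintype.card_le_of_injective f hinj
    simpa [Fintype.card_fun, Set.toFinset_card] using this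
  have hcard2 : Fintype.card ↥(Sᶜ) = Fintype.card (PISVertex R) - Fintype.card ↥S :=
    Fintype.card_compl_set S
  have hSc : Fintype.card ↥S = S.toFinset.card := (Set.toFinset_card S).symm
  have hV : 2 ^ n - 2 ≤ Fintype.card (PISVertex R) := card_vertices_lb hn e
  have hpow : 2 ^ S.toFinset.card ≤ 2 ^ (n - 1) :=
    Nat.pow_le_pow_right (by norm_num) (by omega)
  have h2n : 2 ^ n = 2 * 2 ^ (n - 1) := by
    rw [← pow_succ']
    congr 1
    omega
  have haux := two_pow_aux (n - 4)
  have haux' : n + 2 ≤ 2 ^ (n - 1) := by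
    have h1 : n - 4 + 6 = n + 2 := by omega
    have h2 : n - 4 + 3 = n - 1 := by omega
    rw [h1, h2] at haux
    exact haux
  have hSle : Fintype.card ↥S ≤ Fintype.card (PISVertex R) :=
    Fintype.card_le_of_injective (fun x => x.1) Subtype.val_injective
  omega
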